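/- Consider a system where each process delivers messages strictly in increasing position order, each delivery of position k by process i commits message log_i(k), and any two commits at the same position agree on the message (commit-agreement) while any two commits of the same message agree on the position (position-agreement). Then Agreement holds: if process i delivers m1 and process j delivers m2, then either i delivers m2 or j delivers m1. -/
import Mathlib

/-- in-order gap-free delivery of committed positions, together with
commit-agreement and position-agreement, implies Agreement. -/
theorem agreement_of_commit_and_position_agreement
    {P Msg : Type} (commit : ℕ → ℕ → Msg → Prop)
    (delivers : P → ℕ → Msg → Prop)  -- process i delivers message m at position k
    -- positions delivered by a process are downward closed (no gaps, in order)
    (hdc : ∀ (i : P) (k : ℕ) (m : Msg), delivers i k m →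
      ∀ k' < k, ∃ m', delivers i k' m')
    -- delivering position k means some commit occurred at position k for that message
    (hcm : ∀ (i : P) (k : ℕ) (m : Msg), delivers i k m → ∃ e, commit e k m)
    -- commit-agreement
    (hca : ∀ e1 e2 k m1 m2, commit e1 k m1 → commit e2 k m2 → m1 = m2)
    -- position-agreement
    (hpa : ∀ e1 e2 k1 k2 m, commit e1 k1 m → commit e2 k2 m → k1 = k2) :
    -- Agreement
    ∀ (i j : P) (m1 m2 : Msg),
      (∃ k, delivers i k m1) → (∃ k, delivers j k m2) →
      (∃ k, delivers i k m2) ∨ (∃ k, delivers j k m1) := by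
  rintro i j m1 m2 ⟨k1, h1⟩ ⟨k2, h2⟩
  rcases le_or_gt k2 k1 with h | h
  · left
    rcases eq_or_lt_of_le h with rfl | hlt
    · obtain ⟨e1, c1⟩ := hcm i k2 m1 h1
      obtain ⟨e2, c2⟩ := hcm j k2 m2 h2
      exact ⟨k2, (hca e1 e2 k2 m1 m2 c1 c2) ▸ h1⟩
    · obtain ⟨m', hm'⟩ := hdc i k1 m1 h1 k2 hlt
      obtain ⟨e1, c1⟩ := hcm i k2 m' hm'
      obtain ⟨e2, c2⟩ := hcm j k2 m2 h2
      exact ⟨k2, (hca e1 e2 k2 m' m2 c1 c2) ▸ hm'⟩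
  · right
    obtain ⟨m', hm'⟩ := hdc j k2 m2 h2 k1 h
    obtain ⟨e1, c1⟩ := hcm j k1 m' hm'
    obtain ⟨e2, c2⟩ := hcm i k1 m1 h1
    exact ⟨k1, (hca e1 e2 k1 m' m1 c1 c2) ▸ hm'⟩
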